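/- Let E be a real inner product space, let u₀, u₁, …, u_m ∈ E be unit vectors, let r₀ ∈ (0,1) and r₁, …, r_m ∈ (0, √2). Then for every two-dimensional linear subspace P of E there exists a unit vector w ∈ P such that ‖w − u₀‖ > r₀, ‖w + u₀‖ > r₀, and ‖w − u_i‖ ≠ r_i for every i = 1, …, m. -/

import Mathlib

open scoped RealInnerProductSpace

private lemma quad_root_finite (A B C : ℝ) (h : ¬(A = 0 ∧ B = 0 ∧ C = 0)) :
    {t : ℝ | A * t ^ 2 + B * t + C = 0}.Finite := by
  have hp : (Polynomial.C A * Polynomial.X ^ 2 + Polynomial.C B * Polynomial.X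
      + Polynomial.C C : Polynomial ℝ) ≠ 0 := by
    intro h0
    apply h
    refine ⟨?_, ?_, ?_⟩
    · have := congrArg (fun p => Polynomial.coeff p 2) h0; simpa using this
    · have := congrArg (fun p => Polynomial.coeff p 1) h0; simpa using this
    · have := congrArg (fun p => Polynomial.coeff p 0) h0; simpa using this
  have hf := Polynomial.finite_setOf_isRoot hp
  refine hf.subset ?_
  intro t ht
  simp only [Set.mem_setOf_eq, Polynomial.IsRoot, Polynomial.eval_add,
    Polynomial.eval_mul, Polynomial.eval_pow, Polynomial.eval_C, Polynomial.eval_X]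
  simpa using ht

set_option maxHeartbeats 1000000 in
/-- Let `E` be a real inner product space, `u₀, u₁, …, u_m` unit
vectors, `r₀ ∈ (0,1)` and `r₁, …, r_m ∈ (0,√2)`. Then every two-dimensional subspace
`P ⊆ E` contains a unit vector `w` with `‖w - u₀‖ > r₀`, `‖w + u₀‖ > r₀`, and
`‖w - u_i‖ ≠ r_i` for all `i`. -/
theorem flagwise_stmt8 (E : Type*) [NormedAddCommGroup E] [InnerProductSpace ℝ E]
    (u₀ : E) (hu₀ : ‖u₀‖ = 1) (m : ℕ) (u : Fin m → E) (hu : ∀ i, ‖u i‖ = 1)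
    (r₀ : ℝ) (hr₀ : r₀ ∈ Set.Ioo (0 : ℝ) 1)
    (r : Fin m → ℝ) (hr : ∀ i, r i ∈ Set.Ioo (0 : ℝ) (Real.sqrt 2))
    (P : Submodule ℝ E) (hP : Module.finrank ℝ P = 2) :
    ∃ w ∈ P, ‖w‖ = 1 ∧ r₀ < ‖w - u₀‖ ∧ r₀ < ‖w + u₀‖ ∧ ∀ i, ‖w - u i‖ ≠ r i := by
  obtain ⟨hr₀0, hr₀1⟩ := hr₀
  have hfin : FiniteDimensional ℝ P :=
    Module.finite_of_finrank_pos (by rw [hP]; norm_num)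
  let bP := (stdOrthonormalBasis ℝ P).reindex (finCongr hP)
  set e₁ : E := (bP 0 : E) with he₁def
  set e₂ : E := (bP 1 : E) with he₂def
  have he₁P : e₁ ∈ P := (bP 0).2
  have he₂P : e₂ ∈ P := (bP 1).2
  have hne₁ : ‖e₁‖ = 1 := by
    have := bP.orthonormal.1 0
    exact this
  have hne₂ : ‖e₂‖ = 1 := by
    have := bP.orthonormal.1 1
    exact this
  have h₁₂ : ⟪e₁, e₂⟫ = 0 := by
    have := bP.orthonormal.2 (show (0 : Fin 2) ≠ 1 by decide)
    exact this
  -- coordinates of a vector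
  set a : E → ℝ := fun v => ⟪e₁, v⟫ with ha
  set b : E → ℝ := fun v => ⟪e₂, v⟫ with hb
  -- the thresholds
  set c₀ : ℝ := 1 - r₀ ^ 2 / 2 with hc₀def
  have hc₀ : 0 < c₀ := by simp only [hc₀def]; nlinarith
  set c : Fin m → ℝ := fun i => 1 - (r i) ^ 2 / 2 with hcdef
  have hc : ∀ i, 0 < c i := by
    intro i
    have h1 := (hr i).1
    have h2 := (hr i).2
    have h3 : (r i) ^ 2 < (Real.sqrt 2) ^ 2 := by
      apply pow_lt_pow_left₀ h2 h1.le
      norm_num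
    rw [Real.sq_sqrt (by norm_num : (2:ℝ) ≥ 0)] at h3
    simp only [hcdef]
    linarith
  -- a parameter t₀ at which the inner product with u₀ vanishes
  obtain ⟨t₀, ht₀⟩ : ∃ t : ℝ, a u₀ * (1 - t ^ 2) + 2 * b u₀ * t = 0 := by
    by_cases hA : a u₀ = 0
    · exact ⟨0, by simp [hA]⟩
    · set s := Real.sqrt ((b u₀) ^ 2 + (a u₀) ^ 2) with hs
      have hs2 : s ^ 2 = (b u₀) ^ 2 + (a u₀) ^ 2 := Real.sq_sqrt (by positivity)
      refine ⟨(b u₀ + s) / (a u₀), ?_⟩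
      have key : a u₀ * (1 - ((b u₀ + s) / (a u₀)) ^ 2)
          + 2 * b u₀ * ((b u₀ + s) / (a u₀))
          = ((b u₀) ^ 2 + (a u₀) ^ 2 - s ^ 2) / (a u₀) := by
        field_simp
        ring
      rw [key, hs2]
      rw [show b u₀ ^ 2 + a u₀ ^ 2 - (b u₀ ^ 2 + a u₀ ^ 2) = 0 from by ring]
      simp
  -- the function F t = ⟪w t, u₀⟫
  set F : ℝ → ℝ := fun t => (a u₀ * (1 - t ^ 2) + 2 * b u₀ * t) / (1 + t ^ 2) with hF
  have hFcont : Continuous F := by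
    have h1 : Continuous fun t : ℝ => a u₀ * (1 - t ^ 2) + 2 * b u₀ * t := by fun_prop
    have h2 : Continuous fun t : ℝ => 1 + t ^ 2 := by fun_prop
    exact Continuous.div h1 h2 fun t => by positivity
  have ht₀mem : t₀ ∈ F ⁻¹' Set.Ioo (-c₀) c₀ := by
    simp only [Set.mem_preimage, hF, ht₀, zero_div, Set.mem_Ioo]
    constructor <;> linarith
  obtain ⟨ε, hε, hball⟩ := Metric.isOpen_iff.mp
    (isOpen_Ioo.preimage hFcont) t₀ ht₀mem
  -- the bad set
  set Bad : Set ℝ := ⋃ i, {t : ℝ | (c i + a (u i)) * t ^ 2 + (-(2 * b (u i))) * t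
      + (c i - a (u i)) = 0} with hBad
  have hBadfin : Bad.Finite := by
    refine Set.finite_iUnion fun i => quad_root_finite _ _ _ ?_
    rintro ⟨h1, h2, h3⟩
    have : c i = 0 := by linarith
    exact absurd this (hc i).ne'
  have hIoo : (Set.Ioo (t₀ - ε) (t₀ + ε)).Infinite := Set.Ioo_infinite (by linarith)
  obtain ⟨t, htmem⟩ := (hIoo.diff hBadfin).nonempty
  obtain ⟨htI, htBad⟩ := htmem
  have htF : F t ∈ Set.Ioo (-c₀) c₀ := hball (by rw [Real.ball_eq_Ioo]; exact htI)
  -- define w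
  have hden : (0 : ℝ) < 1 + t ^ 2 := by positivity
  set α : ℝ := (1 - t ^ 2) / (1 + t ^ 2) with hα
  set β : ℝ := (2 * t) / (1 + t ^ 2) with hβ
  set w : E := α • e₁ + β • e₂ with hw
  have hαβ : α ^ 2 + β ^ 2 = 1 := by
    rw [hα, hβ]
    field_simp
    ring
  have hwP : w ∈ P := P.add_mem (P.smul_mem _ he₁P) (P.smul_mem _ he₂P)
  have hw2 : ‖w‖ ^ 2 = 1 := by
    rw [hw, norm_add_sq_real, real_inner_smul_left, real_inner_smul_right, h₁₂]
    simp only [norm_smul, Real.norm_eq_abs, hne₁, hne₂, mul_one, mul_zero]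
    rw [sq_abs, sq_abs]
    linarith [hαβ]
  have hwnorm : ‖w‖ = 1 := by
    have h0 : 0 ≤ ‖w‖ := norm_nonneg w
    calc ‖w‖ = Real.sqrt (‖w‖ ^ 2) := (Real.sqrt_sq h0).symm
      _ = 1 := by rw [hw2, Real.sqrt_one]
  have hinner : ∀ v : E, ⟪w, v⟫ = α * a v + β * b v := by
    intro v
    rw [hw]
    simp [inner_add_left, real_inner_smul_left, ha, hb]
  have hFt : F t = ⟪w, u₀⟫ := by
    rw [hinner, hF, hα, hβ]
    ring
  refine ⟨w, hwP, hwnorm, ?_, ?_, ?_⟩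
  · -- r₀ < ‖w - u₀‖
    apply lt_of_pow_lt_pow_left₀ 2 (norm_nonneg _)
    rw [norm_sub_sq_real, hwnorm, hu₀]
    have := htF.2
    rw [hFt] at this
    simp only [hc₀def] at this
    linarith
  · -- r₀ < ‖w + u₀‖
    apply lt_of_pow_lt_pow_left₀ 2 (norm_nonneg _)
    rw [norm_add_sq_real, hwnorm, hu₀]
    have := htF.1
    rw [hFt] at this
    simp only [hc₀def] at this
    linarith
  · -- ‖w - u i‖ ≠ r i
    intro i heq
    have hsq : ‖w - u i‖ ^ 2 = (r i) ^ 2 := by rw [heq]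
    rw [norm_sub_sq_real, hwnorm, hu i] at hsq
    have hval : ⟪w, u i⟫ = c i := by
      simp only [hcdef]; linarith
    rw [hinner] at hval
    apply htBad
    rw [hBad]
    refine Set.mem_iUnion.mpr ⟨i, ?_⟩
    simp only [Set.mem_setOf_eq]
    rw [hα, hβ] at hval
    field_simp at hval
    linear_combination -hval
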